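/- Let R be a semilocal left Kasch ring. Then the dual Goldie torsion theory splits over R: every left R-module M has submodules T and F with M = T ⊕ F, where T is τ_cG-torsion and F is τ_cG-torsionfree. -/

import Mathlib

universe u

/-- A left `R`-module `K` is a *small module* if there exist a left `R`-module `L` and an
injective `R`-linear map `f : K → L` whose image is a superfluous submodule of `L`. -/
def IsSmallModule (R : Type u) [Ring R] (K : Type u) [AddCommGroup K] [Module R K] : Prop :=
  ∃ (L : Type u) (_ : AddCommGroup L) (_ : Module R L) (f : K →ₗ[R] L),
    Function.Injective f ∧
      ∀ X : Submodule R L, LinearMap.range f ⊔ X = ⊤ → X = ⊤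

/-- `Z*(M)` is the sum of all submodules of `M` that are small modules. -/
def ZStar (R : Type u) [Ring R] (M : Type u) [AddCommGroup M] [Module R M] : Submodule R M :=
  sSup {N : Submodule R M | IsSmallModule R ↥N}

/-- A left `R`-module `M` is `τ_cG`-torsion if `Z*(V/U) ≠ 0` for all submodules `U ⊊ V ⊆ M`. -/
def IsCGTorsion (R : Type u) [Ring R] (M : Type u) [AddCommGroup M] [Module R M] : Prop :=
  ∀ U V : Submodule R M, U < V → ZStar R (↥V ⧸ Submodule.comap V.subtype U) ≠ ⊥

section helpers

variable {R : Type u} [Ring R]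

/-- smallness descends along injections. -/
lemma IsSmallModule.of_injective {K K' : Type u} [AddCommGroup K] [Module R K]
    [AddCommGroup K'] [Module R K'] (h : IsSmallModule R K) (g : K' →ₗ[R] K)
    (hg : Function.Injective g) : IsSmallModule R K' := by
  obtain ⟨L, aL, mL, f, hf, hsm⟩ := h
  refine ⟨L, aL, mL, f.comp g, hf.comp hg, fun X hX => hsm X ?_⟩
  refine top_unique (hX ▸ sup_le_sup_right ?_ X)
  rintro y ⟨x, rfl⟩; exact ⟨g x, rfl⟩

/-- left inverse of `1 - j` for `j` in the Jacobson radical. -/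
lemma jacobson_left_inv {j : R} (hj : j ∈ Ideal.jacobson (⊥ : Ideal R)) :
    ∃ u : R, u * (1 - j) = 1 := by
  have h1 : (1 : R) ∈ Ideal.span {1 - j} := by
    by_contra h1
    have hne : Ideal.span {1 - j} ≠ ⊤ := fun ht => h1 (ht ▸ Submodule.mem_top)
    obtain ⟨m, hm, hle⟩ := Ideal.exists_le_maximal _ hne
    have hjm : j ∈ m := by
      have : Ideal.jacobson (⊥ : Ideal R) ≤ m := sInf_le ⟨bot_le, hm⟩
      exact this hj
    have h1m : (1 : R) - j ∈ m := hle (Ideal.subset_span rfl)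
    have : (1 : R) ∈ m := by simpa using add_mem h1m hjm
    exact hm.ne_top (Submodule.eq_top_iff'.2 fun x => by simpa using m.smul_mem x this)
  obtain ⟨u, hu⟩ := Submodule.mem_span_singleton.1 h1
  exact ⟨u, hu⟩

/-- `J • x` is a small submodule. -/
lemma jacobson_map_small (M : Type u) [AddCommGroup M] [Module R M] (x : M) :
    IsSmallModule R
      ↥(Submodule.map (LinearMap.toSpanSingleton R M x) (Ideal.jacobson (⊥ : Ideal R))) := by
  set N := Submodule.map (LinearMap.toSpanSingleton R M x) (Ideal.jacobson (⊥ : Ideal R)) with hN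
  refine ⟨M, ‹_›, ‹_›, N.subtype, N.injective_subtype, fun X hX => ?_⟩
  rw [Submodule.range_subtype] at hX
  have hxX : x ∈ X := by
    have : x ∈ N ⊔ X := hX ▸ Submodule.mem_top
    obtain ⟨n, hn, ξ, hξ, hsum⟩ := Submodule.mem_sup.1 this
    obtain ⟨j, hj, rfl⟩ := hn
    obtain ⟨u, hu⟩ := jacobson_left_inv hj
    rw [LinearMap.toSpanSingleton_apply] at hsum
    have hx1 : (1 - j) • x = ξ := by
      rw [sub_smul, one_smul, eq_sub_of_add_eq' hsum]
    have : x = u • ξ := by rw [← hx1, smul_smul, hu, one_smul]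
    exact this ▸ X.smul_mem u hξ
  have hNX : N ≤ X := by
    rintro n ⟨j, hj, rfl⟩
    exact X.smul_mem j hxX
  rw [← hX, sup_eq_right.2 hNX]

/-- if `ZStar = ⊥` then the Jacobson radical annihilates the module. -/
lemma jacobson_smul_eq_zero_of_zstar_bot {M : Type u} [AddCommGroup M] [Module R M]
    (h : ZStar R M = ⊥) {j : R} (hj : j ∈ Ideal.jacobson (⊥ : Ideal R)) (x : M) :
    j • x = 0 := by
  have hmem : j • x ∈ Submodule.map (LinearMap.toSpanSingleton R M x)
      (Ideal.jacobson (⊥ : Ideal R)) := ⟨j, hj, rfl⟩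
  have hle : Submodule.map (LinearMap.toSpanSingleton R M x)
      (Ideal.jacobson (⊥ : Ideal R)) ≤ ZStar R M := le_sSup (jacobson_map_small M x)
  rw [h] at hle
  simpa using hle hmem

/-- the Jacobson radical annihilates simple modules. -/
lemma jacobson_smul_simple {S : Type u} [AddCommGroup S] [Module R S]
    (hS : IsSimpleModule R S) {j : R} (hj : j ∈ Ideal.jacobson (⊥ : Ideal R)) (s : S) :
    j • s = 0 := by
  by_contra hne
  have hspan : Submodule.span R {j • s} = ⊤ := by
    rcases hS.eq_bot_or_eq_top (Submodule.span R {j • s}) with h | h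
    · exact absurd (Submodule.span_eq_bot.1 h _ rfl) hne
    · exact h
  have hsmem : s ∈ Submodule.span R {j • s} := hspan ▸ Submodule.mem_top
  obtain ⟨r, hr⟩ := Submodule.mem_span_singleton.1 hsmem
  have hrj : r * j ∈ Ideal.jacobson (⊥ : Ideal R) :=
    (Ideal.jacobson ⊥).smul_mem r hj
  obtain ⟨u, hu⟩ := jacobson_left_inv hrj
  have hzero : s = 0 := by
    have h2 : (1 - r * j) • s = 0 := by
      rw [sub_smul, one_smul, mul_smul, hr, sub_self]
    calc s = (u * (1 - r * j)) • s := by rw [hu, one_smul]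
    _ = u • ((1 - r * j) • s) := by rw [mul_smul]
    _ = 0 := by rw [h2, smul_zero]
  rw [hzero, smul_zero] at hne
  exact hne rfl

/-- modules annihilated by the radical are semisimple when `R/J` is. -/
lemma semisimple_of_jacobson_ann
    (hsemilocal : IsSemisimpleModule R (R ⧸ Ideal.jacobson (⊥ : Ideal R)))
    (W : Type u) [AddCommGroup W] [Module R W]
    (h : ∀ j ∈ Ideal.jacobson (⊥ : Ideal R), ∀ x : W, j • x = 0) :
    IsSemisimpleModule R W := by
  haveI := hsemilocal
  refine isSemisimpleModule_of_isSemisimpleModule_submodule'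
    (p := fun x : W => Submodule.span R {x}) (fun x => ?_) ?_
  · have hker : Ideal.jacobson (⊥ : Ideal R) ≤ LinearMap.ker (LinearMap.toSpanSingleton R W x) :=
      fun j hj => by simpa [LinearMap.toSpanSingleton_apply] using h j hj x
    have : IsSemisimpleModule R
        ↥(LinearMap.range ((Ideal.jacobson (⊥ : Ideal R)).liftQ
          (LinearMap.toSpanSingleton R W x) hker)) :=
      IsSemisimpleModule.range _
    rwa [Submodule.range_liftQ, ← LinearMap.span_singleton_eq_range] at this
  · rw [eq_top_iff]
    exact fun x _ => Submodule.mem_iSup_of_mem x (Submodule.mem_span_singleton_self x)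

end helpers

section helpers2

variable {R : Type u} [Ring R]

/-- a non-small atom has a complement wherever it sits. -/
lemma compl_of_nonsmall_atom {L : Type u} [AddCommGroup L] [Module R L]
    {S' : Submodule R L} (hatom : IsAtom S') (hns : ¬IsSmallModule R ↥S') :
    ∃ X : Submodule R L, IsCompl S' X := by
  have hex : ∃ X : Submodule R L, S' ⊔ X = ⊤ ∧ X ≠ ⊤ := by
    by_contra hc
    push_neg at hc
    refine hns ⟨L, ‹_›, ‹_›, S'.subtype, S'.injective_subtype, fun X hX => ?_⟩
    rw [Submodule.range_subtype] at hX
    exact hc X hX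
  obtain ⟨X, hX1, hX2⟩ := hex
  refine ⟨X, isCompl_iff.2 ⟨disjoint_iff.2 ?_, codisjoint_iff.2 hX1⟩⟩
  rcases lt_or_eq_of_le (inf_le_left : S' ⊓ X ≤ S') with h | h
  · exact hatom.2 _ h
  · exact (hX2 (by rw [← hX1, sup_eq_right.2 (le_of_inf_eq h)])).elim

/-- a simple non-small module is "injective": maps from submodules extend. -/
lemma extension_property {S : Type u} [AddCommGroup S] [Module R S]
    (hS : IsSimpleModule R S) (hns : ¬IsSmallModule R S)
    {M : Type u} [AddCommGroup M] [Module R M] (A : Submodule R M) (g : ↥A →ₗ[R] S) :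
    ∃ h : M →ₗ[R] S, ∀ a : ↥A, h ↑a = g a := by
  classical
  set d : ↥A →ₗ[R] M × S := LinearMap.prod A.subtype (-g) with hd
  set W : Submodule R (M × S) := LinearMap.range d with hW
  set π : M × S →ₗ[R] (M × S) ⧸ W := W.mkQ with hπ
  set ι : S →ₗ[R] (M × S) ⧸ W := π.comp (LinearMap.inr R M S) with hι
  have hιinj : Function.Injective ι := by
    intro s t hst
    have : ((0 : M), s - t) ∈ W := by
      rw [hW]
      have : π (0, s - t) = 0 := by
        have : ((0 : M), s - t) = ((0:M), s) - ((0:M), t) := by simp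
        rw [this, map_sub]
        simpa [hι] using congrArg (fun z => z) (sub_eq_zero.2 hst)
      rwa [hπ, Submodule.mkQ_apply, Submodule.Quotient.mk_eq_zero] at this
    obtain ⟨a, ha⟩ := this
    have ha1 : (a : M) = 0 := congrArg Prod.fst ha
    have ha0 : a = 0 := Subtype.ext ha1
    have := congrArg Prod.snd ha
    rw [ha0] at this
    simp only [hd, LinearMap.prod_apply, Pi.prod, map_zero] at this
    have : s - t = 0 := by simpa using this.symm
    exact sub_eq_zero.1 this
  -- the image of `ι` is a non-small atom, hence complemented
  set hequiv : S ≃ₗ[R] ↥(LinearMap.range ι) := LinearEquiv.ofInjective ι hιinj with hheq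
  have hsimple : IsSimpleModule R ↥(LinearMap.range ι) := IsSimpleModule.congr hequiv.symm
  have hatom : IsAtom (LinearMap.range ι) := isSimpleModule_iff_isAtom.1 hsimple
  have hns' : ¬IsSmallModule R ↥(LinearMap.range ι) := fun hsm =>
    hns (hsm.of_injective hequiv.toLinearMap hequiv.injective)
  obtain ⟨X, hcompl⟩ := compl_of_nonsmall_atom hatom hns'
  set p := Submodule.projectionOnto _ _ hcompl with hp
  set e : ↥(LinearMap.range ι) ≃ₗ[R] S := hequiv.symm with he
  refine ⟨(e.toLinearMap.comp p).comp (π.comp (LinearMap.inl R M S)), fun a => ?_⟩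
  have hkey : π ((a : M), 0) = ι (g a) := by
    have hmem : (((a : M), 0) - ((0 : M), g a)) ∈ W := by
      refine ⟨a, ?_⟩
      simp [hd]
    have := (Submodule.Quotient.eq W).2 hmem
    simpa [hι, hπ] using this
  simp only [LinearMap.comp_apply, LinearMap.inl_apply]
  rw [hkey]
  have : p (ι (g a)) = hequiv (g a) := by
    have h2 : ι (g a) = ↑(hequiv (g a)) := by
      rw [hheq]; exact (LinearEquiv.ofInjective_apply ι (h := hιinj) (g a)).symm
    rw [h2, hp, Submodule.projectionOnto_apply_left]
  rw [this, he]
  exact hequiv.symm_apply_apply (g a)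

end helpers2

section helpers3

variable {R : Type u} [Ring R]

/-- over a Kasch ring, a simple non-small module is projective. -/
lemma projective_of_nonsmall_simple
    (hkasch : ∀ (M : Type u) [AddCommGroup M] [Module R M], IsSimpleModule R M →
      ∃ f : M →ₗ[R] R, Function.Injective f)
    {S : Type u} [AddCommGroup S] [Module R S]
    (hS : IsSimpleModule R S) (hns : ¬IsSmallModule R S) : Module.Projective R S := by
  obtain ⟨f, hf⟩ := hkasch S hS
  set e : S ≃ₗ[R] ↥(LinearMap.range f) := LinearEquiv.ofInjective f hf with he
  have hsimple : IsSimpleModule R ↥(LinearMap.range f) := IsSimpleModule.congr e.symm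
  have hatom : IsAtom (LinearMap.range f) := isSimpleModule_iff_isAtom.1 hsimple
  have hns' : ¬IsSmallModule R ↥(LinearMap.range f) := fun hsm =>
    hns (hsm.of_injective e.toLinearMap e.injective)
  obtain ⟨X, hcompl⟩ := compl_of_nonsmall_atom hatom hns'
  set p := Submodule.projectionOnto _ _ hcompl with hp
  refine Module.Projective.of_split (M := R) f (e.symm.toLinearMap.comp p) ?_
  ext x
  simp only [LinearMap.comp_apply, LinearMap.id_apply, LinearEquiv.coe_coe]
  have h1 : p (f x) = e x := by
    have h2 : f x = ↑(e x) := by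
      rw [he]; exact (LinearEquiv.ofInjective_apply f (h := hf) x).symm
    rw [h2, hp, Submodule.projectionOnto_apply_left]
  rw [h1, LinearEquiv.symm_apply_apply]

/-- a module with trivial `ZStar` and a nonzero element has a non-small atom. -/
lemma exists_nonsmall_atom
    (hsemilocal : IsSemisimpleModule R (R ⧸ Ideal.jacobson (⊥ : Ideal R)))
    {W : Type u} [AddCommGroup W] [Module R W] (hz : ZStar R W = ⊥)
    (hW : ∃ w : W, w ≠ 0) :
    ∃ S₀ : Submodule R W, IsAtom S₀ ∧ ¬IsSmallModule R ↥S₀ := by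
  haveI hss : IsSemisimpleModule R W :=
    semisimple_of_jacobson_ann hsemilocal W
      (fun j hj x => jacobson_smul_eq_zero_of_zstar_bot hz hj x)
  obtain ⟨w, hw⟩ := hW
  have htop : (⊤ : Submodule R W) ≠ ⊥ := fun h => by
    have : w ∈ (⊥ : Submodule R W) := h ▸ (Submodule.mem_top : w ∈ ⊤)
    exact hw (by simpa using this)
  rcases (IsAtomic.eq_bot_or_exists_atom_le (⊤ : Submodule R W)) with h | ⟨a, ha, _⟩
  · exact absurd h htop
  · refine ⟨a, ha, fun hsm => ?_⟩
    have : a ≤ ZStar R W := le_sSup hsm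
    rw [hz] at this
    exact ha.1 (le_bot_iff.1 this)

end helpers3

section helpers4

variable {R : Type u} [Ring R]

lemma indep_finsupp_sum_eq_zero {ι : Type u} {N : Type u} [AddCommGroup N] [Module R N]
    {p : ι → Submodule R N} (h : iSupIndep p) (c : ι →₀ N) (hc : ∀ i, c i ∈ p i)
    (hsum : c.sum (fun _ x => x) = 0) (i : ι) : c i = 0 := by
  classical
  by_contra hne
  have hi : i ∈ c.support := Finsupp.mem_support_iff.2 hne
  have hsum' : ∑ j ∈ c.support.erase i, c j + c i = 0 := by
    rw [Finset.sum_erase_add _ _ hi]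
    exact hsum
  have hmem : c i ∈ ⨆ (j) (_ : j ≠ i), p j := by
    have : c i = -∑ j ∈ c.support.erase i, c j := by
      rw [eq_neg_of_add_eq_zero_right hsum']
    rw [this]
    refine Submodule.neg_mem _ (Submodule.sum_mem _ fun j hj => ?_)
    exact le_iSup₂ (f := fun (j : ι) (_ : j ≠ i) => p j) j (Finset.ne_of_mem_erase hj) (hc j)
  exact hne ((Submodule.mem_bot R).1 ((h i).le_bot ⟨hc i, hmem⟩))

end helpers4

/-- Over a semilocal left Kasch ring (`R/J(R)` semisimple, every simple left `R`-module embeds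
into `R`), the dual Goldie torsion theory splits: every left `R`-module is the direct sum of a
`τ_cG`-torsion submodule and a `τ_cG`-torsionfree submodule. -/
theorem stmt_13 (R : Type u) [Ring R]
    (hsemilocal : IsSemisimpleModule R (R ⧸ Ideal.jacobson (⊥ : Ideal R)))
    (hkasch : ∀ (M : Type u) [AddCommGroup M] [Module R M], IsSimpleModule R M →
      ∃ f : M →ₗ[R] R, Function.Injective f) :
    ∀ (M : Type u) [AddCommGroup M] [Module R M],
      ∃ T F : Submodule R M, IsCompl T F ∧ IsCGTorsion R ↥T ∧ ZStar R ↥F = ⊥ := by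
  intro M _ _
  classical
  set SSet : Set (Submodule R M) := {N | ∃ (S : Type u) (_ : AddCommGroup S) (_ : Module R S)
      (f : M →ₗ[R] S), IsSimpleModule R S ∧ ¬IsSmallModule R S ∧ N = LinearMap.ker f} with hSSet
  set K : Submodule R M := sInf SSet with hKdef
  -- Step A : K is torsion
  have htor : IsCGTorsion R ↥K := by
    intro U V hUV h0
    obtain ⟨x, hxV, hxU⟩ := SetLike.exists_of_lt hUV
    have hne : ∃ q : (↥V ⧸ Submodule.comap V.subtype U), q ≠ 0 := by
      refine ⟨Submodule.Quotient.mk ⟨x, hxV⟩, ?_⟩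
      rw [ne_eq, Submodule.Quotient.mk_eq_zero]
      simpa using hxU
    obtain ⟨S₀, hatom, hns⟩ := exists_nonsmall_atom hsemilocal h0 hne
    have hsimple : IsSimpleModule R ↥S₀ := isSimpleModule_iff_isAtom.2 hatom
    obtain ⟨X, hcompl⟩ := compl_of_nonsmall_atom hatom hns
    set pr := Submodule.linearProjOfIsCompl _ _ hcompl with hpr
    haveI : Nontrivial ↥S₀ := IsSimpleModule.nontrivial R ↥S₀
    obtain ⟨s₀, hs₀⟩ := exists_ne (0 : ↥S₀)
    obtain ⟨v, hv⟩ := Submodule.mkQ_surjective (Submodule.comap V.subtype U) ((s₀ : _))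
    set g : ↥V →ₗ[R] ↥S₀ := pr.comp (Submodule.comap V.subtype U).mkQ with hg
    have hgv : g v = s₀ := by
      show pr ((Submodule.comap V.subtype U).mkQ v) = s₀
      rw [hv, hpr]
      exact Submodule.linearProjOfIsCompl_apply_left hcompl s₀
    set V' : Submodule R M := Submodule.map K.subtype V with hV'
    set eV : ↥V ≃ₗ[R] ↥V' := Submodule.equivMapOfInjective K.subtype K.injective_subtype V
      with heV
    set g' : ↥V' →ₗ[R] ↥S₀ := g.comp eV.symm.toLinearMap with hg'
    obtain ⟨h, hh⟩ := extension_property hsimple hns V' g'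
    have hKker : K ≤ LinearMap.ker h :=
      sInf_le ⟨↥S₀, inferInstance, inferInstance, h, hsimple, hns, rfl⟩
    set a : ↥V' := eV v with ha
    have haK : (a : M) ∈ K := by
      obtain ⟨y, -, hy⟩ := a.2
      exact hy ▸ y.2
    have heq : h ↑a = g' a := hh a
    have hga : g' a = s₀ := by
      rw [hg', LinearMap.comp_apply, ha, LinearEquiv.coe_coe, LinearEquiv.symm_apply_apply, hgv]
    have hzero : h ↑a = 0 := LinearMap.mem_ker.1 (hKker haK)
    rw [hzero, hga] at heq
    exact hs₀ heq.symm
  -- Step B : the radical annihilates M ⧸ K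
  have hJQ : ∀ j ∈ Ideal.jacobson (⊥ : Ideal R), ∀ y : M ⧸ K, j • y = 0 := by
    intro j hj y
    obtain ⟨x, rfl⟩ := K.mkQ_surjective y
    rw [← map_smul, Submodule.mkQ_apply, Submodule.Quotient.mk_eq_zero]
    rw [hKdef]
    refine Submodule.mem_sInf.2 ?_
    rintro N ⟨S, iS1, iS2, f, hSs, hSn, rfl⟩
    rw [LinearMap.mem_ker, map_smul]
    exact jacobson_smul_simple hSs hj (f x)
  haveI hssQ : IsSemisimpleModule R (M ⧸ K) :=
    semisimple_of_jacobson_ann hsemilocal _ (fun j hj y => hJQ j hj y)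
  -- Step D : atoms of M ⧸ K are non-small
  have hatomns : ∀ S₁ : Submodule R (M ⧸ K), IsAtom S₁ → ¬IsSmallModule R ↥S₁ := by
    intro S₁ hat hsm
    obtain ⟨xb, hxbS, hxbne⟩ := (Submodule.ne_bot_iff S₁).1 hat.1
    obtain ⟨x, rfl⟩ := K.mkQ_surjective xb
    have hxK : x ∉ K := fun hx =>
      hxbne (by rwa [Submodule.mkQ_apply, Submodule.Quotient.mk_eq_zero])
    have hexN : ∃ N ∈ SSet, x ∉ N := by
      by_contra hcon
      push_neg at hcon
      exact hxK (hKdef ▸ Submodule.mem_sInf.2 hcon)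
    obtain ⟨N, hNmem, hxN⟩ := hexN
    obtain ⟨S, iS1, iS2, f, hSs, hSn, rfl⟩ := hNmem
    have hKf : K ≤ LinearMap.ker f := by
      rw [hKdef]; exact sInf_le ⟨S, iS1, iS2, f, hSs, hSn, rfl⟩
    set g₁ : ↥S₁ →ₗ[R] S := (K.liftQ f hKf).comp S₁.subtype with hg₁
    have hfx : f x ≠ 0 := fun hfz => hxN (LinearMap.mem_ker.2 hfz)
    have hg₁x : g₁ ⟨K.mkQ x, hxbS⟩ = f x := by
      rw [hg₁, LinearMap.comp_apply]
      exact Submodule.liftQ_apply K f x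
    haveI hS₁simple : IsSimpleModule R ↥S₁ := isSimpleModule_iff_isAtom.2 hat
    have hker : LinearMap.ker g₁ = ⊥ := by
      rcases hS₁simple.eq_bot_or_eq_top (LinearMap.ker g₁) with hk | hk
      · exact hk
      · exfalso
        have : g₁ ⟨K.mkQ x, hxbS⟩ = 0 := by
          have : (⟨K.mkQ x, hxbS⟩ : ↥S₁) ∈ LinearMap.ker g₁ := hk ▸ Submodule.mem_top
          exact LinearMap.mem_ker.1 this
        exact hfx (hg₁x ▸ this)
    have hrange : LinearMap.range g₁ = ⊤ := by
      rcases hSs.eq_bot_or_eq_top (LinearMap.range g₁) with hr | hr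
      · exfalso
        have : g₁ ⟨K.mkQ x, hxbS⟩ ∈ LinearMap.range g₁ := ⟨_, rfl⟩
        rw [hr, Submodule.mem_bot] at this
        exact hfx (hg₁x ▸ this)
      · exact hr
    set e₁ : ↥S₁ ≃ₗ[R] S := LinearEquiv.ofBijective g₁
      ⟨LinearMap.ker_eq_bot.1 hker, LinearMap.range_eq_top.1 hrange⟩ with he₁
    exact hSn (hsm.of_injective e₁.symm.toLinearMap e₁.symm.injective)
  -- Step E : decompose M ⧸ K and lift
  obtain ⟨s, hindep, hstop, hsimp⟩ :=
    IsSemisimpleModule.exists_sSupIndep_sSup_simples_eq_top (R := R) (M := M ⧸ K)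
  have hindep' : iSupIndep (fun i : s => (i : Submodule R (M ⧸ K))) := (sSupIndep_iff s).1 hindep
  have hlift : ∀ i : s, ∃ h : ↥(i : Submodule R (M ⧸ K)) →ₗ[R] M,
      K.mkQ.comp h = (i : Submodule R (M ⧸ K)).subtype := by
    intro i
    haveI : Module.Projective R ↥(i : Submodule R (M ⧸ K)) :=
      projective_of_nonsmall_simple hkasch (hsimp i i.2)
        (hatomns _ (isSimpleModule_iff_isAtom.1 (hsimp i i.2)))
    exact Module.projective_lifting_property K.mkQ _ (K.mkQ_surjective)
  choose hmap hres using hlift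
  set F : Submodule R M := ⨆ i : s, LinearMap.range (hmap i) with hF
  have hmapmk : ∀ (i : s) (z : ↥(i : Submodule R (M ⧸ K))), K.mkQ (hmap i z) = ↑z := by
    intro i z
    have := congrArg (fun φ => φ z) (hres i)
    simpa using this
  have hdisj : Disjoint K F := by
    rw [disjoint_iff, eq_bot_iff]
    rintro y hy
    obtain ⟨hyK, hyF⟩ := Submodule.mem_inf.1 hy
    rw [hF] at hyF
    obtain ⟨c, hc, hcsum⟩ := (Submodule.mem_iSup_iff_exists_finsupp _ _).1 hyF
    set d : s →₀ (M ⧸ K) := c.mapRange K.mkQ (map_zero _) with hd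
    have hdi : ∀ i : s, d i ∈ (i : Submodule R (M ⧸ K)) := by
      intro i
      obtain ⟨z, hz⟩ := hc i
      rw [hd, Finsupp.mapRange_apply, ← hz, hmapmk]
      exact z.2
    have hdsum : d.sum (fun _ x => x) = 0 := by
      have h1 : d.sum (fun _ x => x) = K.mkQ (c.sum fun _ x => x) := by
        rw [hd, Finsupp.sum_mapRange_index (fun _ => rfl)]
        exact (map_finsuppSum K.mkQ c fun _ x => x).symm
      rw [h1, hcsum, Submodule.mkQ_apply, Submodule.Quotient.mk_eq_zero]
      exact hyK
    have hdzero : ∀ i, d i = 0 := fun i => indep_finsupp_sum_eq_zero hindep' d hdi hdsum i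
    have hczero : ∀ i, c i = 0 := by
      intro i
      obtain ⟨z, hz⟩ := hc i
      have hz0 : (↑z : M ⧸ K) = 0 := by
        rw [← hmapmk i z, hz]
        have := hdzero i
        rwa [hd, Finsupp.mapRange_apply] at this
      have : z = 0 := Subtype.ext hz0
      rw [← hz, this, map_zero]
    have : y = 0 := by
      rw [← hcsum]
      rw [show c = 0 from Finsupp.ext hczero, Finsupp.sum_zero_index]
    simpa [this]
  have hcodis : Codisjoint K F := by
    rw [codisjoint_iff, eq_top_iff]
    intro m _
    have hmapF : Submodule.map K.mkQ F = ⊤ := by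
      rw [hF, Submodule.map_iSup]
      have heach : ∀ i : s, Submodule.map K.mkQ (LinearMap.range (hmap i))
          = (i : Submodule R (M ⧸ K)) := by
        intro i
        rw [← LinearMap.range_comp, hres i, Submodule.range_subtype]
      rw [iSup_congr heach, ← sSup_eq_iSup', hstop]
    have hmkF : K.mkQ m ∈ Submodule.map K.mkQ F := by rw [hmapF]; trivial
    obtain ⟨y, hyF, hym⟩ := hmkF
    have hmy : m - y ∈ K := by
      rw [← Submodule.Quotient.mk_eq_zero]
      have : K.mkQ (m - y) = 0 := by rw [map_sub, hym, sub_self]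
      rwa [Submodule.mkQ_apply] at this
    have : m = (m - y) + y := by abel
    rw [this]
    exact Submodule.add_mem_sup hmy hyF
  -- Step F : ZStar F = ⊥
  have hFz : ZStar R ↥F = ⊥ := by
    rw [ZStar, sSup_eq_bot]
    intro N hN
    by_contra hNne
    set φ : ↥F →ₗ[R] M ⧸ K := K.mkQ.comp F.subtype with hφ
    have hφinj : Function.Injective φ := by
      rw [← LinearMap.ker_eq_bot, eq_bot_iff]
      rintro z hz
      rw [LinearMap.mem_ker, hφ, LinearMap.comp_apply, Submodule.mkQ_apply,
        Submodule.Quotient.mk_eq_zero] at hz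
      have : (↑z : M) ∈ K ⊓ F := Submodule.mem_inf.2 ⟨hz, z.2⟩
      rw [disjoint_iff.1 hdisj] at this
      simpa using Subtype.ext ((Submodule.mem_bot R).1 this)
    set N' : Submodule R (M ⧸ K) := Submodule.map φ N with hN'
    have hN'ne : N' ≠ ⊥ := by
      intro hb
      apply hNne
      rw [eq_bot_iff]
      intro z hz
      have : φ z ∈ N' := Submodule.mem_map_of_mem hz
      rw [hb, Submodule.mem_bot] at this
      have : z = 0 := hφinj (by simpa using this)
      simpa [this]
    have hN'small : IsSmallModule R ↥N' :=
      hN.of_injective ((Submodule.equivMapOfInjective φ hφinj N).symm.toLinearMap)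
        (Submodule.equivMapOfInjective φ hφinj N).symm.injective
    rcases IsAtomic.eq_bot_or_exists_atom_le N' with hb | ⟨a, haat, hale⟩
    · exact hN'ne hb
    · exact hatomns a haat
        (hN'small.of_injective (Submodule.inclusion hale) (Submodule.inclusion_injective hale))
  exact ⟨K, F, ⟨hdisj, hcodis⟩, htor, hFz⟩
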